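/- For any level s, s equals the potentiation of the set of levels in s: s = pot({r ∈ s : r is a level}). -/
import Mathlib


def pot (a : ZFSet) : ZFSet :=
  ZFSet.sep (fun x => ∃ c ∈ a, x ⊆ c) (ZFSet.powerset (ZFSet.sUnion a))

def Potent (a : ZFSet) : Prop := ∀ x, (∃ c, x ⊆ c ∧ c ∈ a) → x ∈ a

def IsHistory (h : ZFSet) : Prop := ∀ x ∈ h, x = pot (x ∩ h)

def IsLevel (s : ZFSet) : Prop := ∃ h, IsHistory h ∧ s = pot h

lemma mem_pot {a x : ZFSet} : x ∈ pot a ↔ ∃ c ∈ a, x ⊆ c := by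
  constructor
  · intro hx
    exact ((ZFSet.mem_sep).1 hx).2
  · rintro ⟨c, hc, hxc⟩
    refine (ZFSet.mem_sep).2 ⟨?_, c, hc, hxc⟩
    exact ZFSet.mem_powerset.2 fun y hy => ZFSet.mem_sUnion.2 ⟨c, hc, hxc hy⟩

lemma level_trans {s : ZFSet} (hs : IsLevel s) : ∀ x ∈ s, ∀ y ∈ x, y ∈ s := by
  obtain ⟨h, hh, rfl⟩ := hs
  intro x hx y hy
  obtain ⟨c, hc, hxc⟩ := mem_pot.1 hx
  have hyc : y ∈ c := hxc hy
  rw [hh c hc] at hyc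
  obtain ⟨d, hd, hyd⟩ := mem_pot.1 hyc
  exact mem_pot.2 ⟨d, (ZFSet.mem_inter.1 hd).2, hyd⟩

lemma hist_mem_level : ∀ a h : ZFSet, IsHistory h → a ∈ h → IsLevel a := by
  intro a
  induction a using ZFSet.inductionOn with
  | _ a IH =>
    intro h hh hah
    have ha : a = pot (a ∩ h) := hh a hah
    refine ⟨a ∩ h, ?_, ha⟩
    intro b hb
    have hbh := (ZFSet.mem_inter.1 hb).2
    have hba := (ZFSet.mem_inter.1 hb).1
    have hbpot : b = pot (b ∩ h) := hh b hbh
    have hblevel : IsLevel b := IH b hba h hh hbh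
    apply ZFSet.ext
    intro x
    constructor
    · intro hx
      have hx' : x ∈ pot (b ∩ h) := by rwa [← hbpot]
      obtain ⟨c, hc, hxc⟩ := mem_pot.1 hx'
      have hcb := (ZFSet.mem_inter.1 hc).1
      have hch := (ZFSet.mem_inter.1 hc).2
      -- c ⊆ b since b is a level (transitive)
      have hcsub : c ⊆ b := fun z hz => level_trans hblevel c hcb z hz
      -- hence c ∈ pot (a ∩ h) = a
      have hca : c ∈ a := by
        rw [ha]
        exact mem_pot.2 ⟨b, ZFSet.mem_inter.2 ⟨hba, hbh⟩, hcsub⟩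
      exact mem_pot.2 ⟨c, ZFSet.mem_inter.2 ⟨hcb, ZFSet.mem_inter.2 ⟨hca, hch⟩⟩, hxc⟩
    · intro hx
      obtain ⟨c, hc, hxc⟩ := mem_pot.1 hx
      have hcb := (ZFSet.mem_inter.1 hc).1
      have hch := (ZFSet.mem_inter.1 (ZFSet.mem_inter.1 hc).2).2
      rw [hbpot]
      exact mem_pot.2 ⟨c, ZFSet.mem_inter.2 ⟨hcb, hch⟩, hxc⟩

theorem stmt5 (s : ZFSet) (hs : IsLevel s) : s = pot (ZFSet.sep IsLevel s) := by
  obtain ⟨h, hh, hs'⟩ := hs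
  apply ZFSet.ext
  intro x
  constructor
  · intro hx
    have hx' : x ∈ pot h := hs' ▸ hx
    obtain ⟨c, hc, hxc⟩ := mem_pot.1 hx'
    have hcs : c ∈ s := by
      rw [hs']; exact mem_pot.2 ⟨c, hc, fun z hz => hz⟩
    have hclev : IsLevel c := hist_mem_level c h hh hc
    exact mem_pot.2 ⟨c, ZFSet.mem_sep.2 ⟨hcs, hclev⟩, hxc⟩
  · intro hx
    obtain ⟨r, hr, hxr⟩ := mem_pot.1 hx
    have hrs : r ∈ s := (ZFSet.mem_sep.1 hr).1
    rw [hs'] at hrs ⊢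
    obtain ⟨d, hd, hrd⟩ := mem_pot.1 hrs
    exact mem_pot.2 ⟨d, hd, fun z hz => hrd (hxr hz)⟩
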